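/- arXiv:2002.01597 — 2 statements merged into one kernel-verified Lean document; each statement's English description precedes it below -/
import Mathlib

section
/- Let μ ≥ 1 and k ≥ 3, and let F be a multihypergraph in which every edge has multiplicity at most μ and minimum degree δ(F) ≥ μ·2^(k−2) + 2. Then F contains a Berge cycle of length at least k. -/
/-- A multihypergraph `F` (a multiset of hyperedges) has a Berge cycle of length `ℓ`:
there are `ℓ` distinct vertices `v i` and `ℓ` distinct hyperedge instances `e i`
(i.e. the multiset of the `e i` is a sub-multiset of `F`) with `v i, v (i+1) ∈ e i`
cyclically. -/
def MHasBergeCycle {V : Type*} (F : Multiset (Finset V)) (ℓ : ℕ) : Prop :=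
  ∃ (v : Fin ℓ → V) (e : Fin ℓ → Finset V),
    Function.Injective v ∧
    Multiset.map e (Finset.univ : Finset (Fin ℓ)).val ≤ F ∧
    ∀ i : Fin ℓ, v i ∈ e i ∧ v ⟨(i.1 + 1) % ℓ, Nat.mod_lt _ i.pos⟩ ∈ e i

namespace Berge18

set_option linter.unusedSectionVars false

variable {V : Type*} [DecidableEq V]

/-- Berge path with `p` vertices `v 0, …, v (p-1)` and edges `e 0, …, e (p-2)`. -/
def IsBPath (F : Multiset (Finset V)) (p : ℕ) (v : ℕ → V) (e : ℕ → Finset V) : Prop :=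
  (∀ i < p, ∀ j < p, v i = v j → i = j) ∧
  (Multiset.map e (Multiset.range (p - 1)) ≤ F) ∧
  (∀ i, i + 1 < p → v i ∈ e i ∧ v (i + 1) ∈ e i)

lemma filter_map_eq (e : ℕ → Finset V) (pred : Finset V → Prop) [DecidablePred pred]
    (s : Multiset ℕ) :
    (s.map e).filter pred = (s.filter (fun i => pred (e i))).map e := by
  induction s using Multiset.induction with
  | empty => simp
  | cons a s ih =>
      by_cases h : pred (e a) <;>
        simp [Multiset.filter_cons, h, ih]

lemma card_filter_mem_le (F : Multiset (Finset V)) (μ : ℕ)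
    (hmult : ∀ A : Finset V, F.count A ≤ μ) (S : Finset (Finset V)) :
    Multiset.card (F.filter (· ∈ S)) ≤ S.card * μ := by
  classical
  induction S using Finset.induction_on with
  | empty =>
      rw [show Multiset.card (F.filter (· ∈ (∅ : Finset (Finset V)))) = 0 by
        simp [Multiset.filter_eq_nil.mpr]]
      simp
  | insert _ _ ha ih =>
      rename_i a S
      have hsplit : F.filter (· ∈ insert a S) = F.filter (· = a) + F.filter (· ∈ S) := by
        have h1 : F.filter (· = a) + F.filter (· ∈ S)
            = F.filter (fun x => x = a ∨ x ∈ S) + F.filter (fun x => x = a ∧ x ∈ S) :=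
          Multiset.filter_add_filter _ _ F
        have h2 : F.filter (fun x => x = a ∧ x ∈ S) = 0 := by
          rw [Multiset.filter_eq_nil]
          rintro x - ⟨rfl, hx⟩
          exact ha hx
        have h3 : F.filter (fun x => x = a ∨ x ∈ S) = F.filter (· ∈ insert a S) := by
          apply Multiset.filter_congr
          intro x _
          simp [Finset.mem_insert]
        rw [h1, h2, h3, add_zero]
      have hcount : Multiset.card (F.filter (· = a)) = F.count a := by
        rw [Multiset.filter_eq', Multiset.card_replicate]
      rw [hsplit, Multiset.card_add, Finset.card_insert_of_notMem ha, hcount]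
      have := hmult a
      calc F.count a + Multiset.card (F.filter (· ∈ S)) ≤ μ + S.card * μ := by
            exact Nat.add_le_add this ih
        _ = (S.card + 1) * μ := by ring

lemma cons_le_of_mem_sub {f : Finset V} {M E F : Multiset (Finset V)}
    (hME : M ≤ E) (hEF : E ≤ F) (hf : f ∈ F - E) : f ::ₘ M ≤ F := by
  rw [Multiset.le_iff_count]
  intro A
  rw [Multiset.count_cons]
  have hcnt : 0 < (F - E).count f := Multiset.count_pos.mpr hf
  rw [Multiset.count_sub] at hcnt
  by_cases hA : A = f
  · subst hA
    have h1 : M.count A ≤ E.count A := Multiset.count_le_of_le A hME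
    have h2 : E.count A ≤ F.count A := Multiset.count_le_of_le A hEF
    simp only [if_pos rfl] at *
    simp at *
    omega
  · simp only [if_neg hA, add_zero]
    exact le_trans (Multiset.count_le_of_le A hME) (Multiset.count_le_of_le A hEF)

lemma buildCycle (F : Multiset (Finset V)) (ℓ : ℕ) (w : ℕ → V) (g : ℕ → Finset V)
    (hw : ∀ i < ℓ, ∀ j < ℓ, w i = w j → i = j)
    (hsub : Multiset.map g (Multiset.range ℓ) ≤ F)
    (hcyc : ∀ i < ℓ, w i ∈ g i ∧ w ((i + 1) % ℓ) ∈ g i) :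
    MHasBergeCycle F ℓ := by
  refine ⟨fun i => w i.1, fun i => g i.1, ?_, ?_, ?_⟩
  · intro a b hab
    exact Fin.ext (hw a.1 a.2 b.1 b.2 hab)
  · have h1 : Multiset.map (fun i : Fin ℓ => g i.1) (Finset.univ : Finset (Fin ℓ)).val
        = Multiset.map g (Multiset.map Fin.val (Finset.univ : Finset (Fin ℓ)).val) := by
      rw [Multiset.map_map]
      rfl
    have h2 : Multiset.map Fin.val (Finset.univ : Finset (Fin ℓ)).val
        = Multiset.range ℓ := by
      have := Fin.map_valEmbedding_univ (n := ℓ)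
      have h3 := congrArg Finset.val this
      rw [Finset.map_val] at h3
      rw [show ⇑(Fin.valEmbedding : Fin ℓ ↪ ℕ) = Fin.val from rfl] at h3
      rw [h3, Nat.Iio_eq_range, Finset.range_val]
    rw [h1, h2]
    exact hsub
  · intro i
    exact hcyc i.1 i.2

lemma cycle_unused {F : Multiset (Finset V)} {k n : ℕ} {v : ℕ → V} {e : ℕ → Finset V}
    (hk : 1 ≤ k) (hcon : ∀ ℓ, k ≤ ℓ → ¬ MHasBergeCycle F ℓ)
    (hpath : IsBPath F (n + 1) v e)
    {f : Finset V} {j : ℕ}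
    (hf : f ∈ F - Multiset.map e (Multiset.range n))
    (hend : v n ∈ f) (hjv : v j ∈ f) (hjk : j + k ≤ n + 1) : False := by
  obtain ⟨hinj, hE, hpair⟩ := hpath
  rw [show n + 1 - 1 = n from rfl] at hE
  have hjn : j ≤ n := by omega
  set d := n - j with hd
  have hdn : j + d = n := by omega
  -- the cycle  v j, v (j+1), …, v n  closed by f
  have : MHasBergeCycle F (d + 1) := by
    apply buildCycle F (d + 1) (fun s => v (j + s))
        (fun s => if s = d then f else e (j + s))
    · intro i hi j' hj' hij
      have := hinj (j + i) (by omega) (j + j') (by omega) hij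
      omega
    · rw [Multiset.range_succ, Multiset.map_cons, if_pos rfl]
      have hcg : Multiset.map (fun s => if s = d then f else e (j + s)) (Multiset.range d)
          = Multiset.map e (Multiset.map (fun s => j + s) (Multiset.range d)) := by
        rw [Multiset.map_map]
        apply Multiset.map_congr rfl
        intro x hx
        rw [Multiset.mem_range] at hx
        simp only [Function.comp]
        rw [if_neg (by omega)]
      rw [hcg]
      apply cons_le_of_mem_sub _ hE hf
      have hle : Multiset.map (fun s => j + s) (Multiset.range d) ≤ Multiset.range n := by
        rw [Multiset.le_iff_subset]
        · intro x hx
          rw [Multiset.mem_map] at hx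
          obtain ⟨s, hs, rfl⟩ := hx
          rw [Multiset.mem_range] at hs ⊢
          omega
        · exact (Multiset.nodup_range d).map (fun a b h => by omega)
      exact Multiset.map_le_map hle
    · intro i hi
      by_cases hid : i = d
      · subst hid
        rw [if_pos rfl]
        constructor
        · rw [hdn]; exact hend
        · rw [Nat.mod_self]
          simpa using hjv
      · rw [if_neg hid]
        have hi' : i < d := by omega
        have hp := hpair (j + i) (by omega)
        constructor
        · exact hp.1
        · rw [Nat.mod_eq_of_lt (by omega)]
          have : j + (i + 1) = j + i + 1 := by omega
          rw [this]
          exact hp.2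
  exact hcon (d + 1) (by omega) this

lemma cycle_used {F : Multiset (Finset V)} {k n : ℕ} {v : ℕ → V} {e : ℕ → Finset V}
    (hk : 1 ≤ k) (hcon : ∀ ℓ, k ≤ ℓ → ¬ MHasBergeCycle F ℓ)
    (hpath : IsBPath F (n + 1) v e)
    {i : ℕ} (hi : i < n) (hend : v n ∈ e i) (hik : i + k + 1 ≤ n + 1) : False := by
  obtain ⟨hinj, hE, hpair⟩ := hpath
  rw [show n + 1 - 1 = n from rfl] at hE
  set d := n - i - 1 with hd
  have hdn : i + 1 + d = n := by omega
  have : MHasBergeCycle F (d + 1) := by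
    apply buildCycle F (d + 1) (fun s => v (i + 1 + s))
        (fun s => if s = d then e i else e (i + 1 + s))
    · intro a ha b hb hab
      have := hinj (i + 1 + a) (by omega) (i + 1 + b) (by omega) hab
      omega
    · rw [Multiset.range_succ, Multiset.map_cons, if_pos rfl]
      have hcg : Multiset.map (fun s => if s = d then e i else e (i + 1 + s))
            (Multiset.range d)
          = Multiset.map e (Multiset.map (fun s => i + 1 + s) (Multiset.range d)) := by
        rw [Multiset.map_map]
        apply Multiset.map_congr rfl
        intro x hx
        rw [Multiset.mem_range] at hx
        simp only [Function.comp]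
        rw [if_neg (by omega)]
      rw [hcg]
      refine le_trans ?_ hE
      have hidx : (i ::ₘ Multiset.map (fun s => i + 1 + s) (Multiset.range d))
          ≤ Multiset.range n := by
        rw [Multiset.le_iff_subset]
        · intro x hx
          rw [Multiset.mem_cons] at hx
          rw [Multiset.mem_range]
          rcases hx with rfl | hx
          · omega
          · rw [Multiset.mem_map] at hx
            obtain ⟨s, hs, rfl⟩ := hx
            rw [Multiset.mem_range] at hs
            omega
        · rw [Multiset.nodup_cons]
          constructor
          · intro hmem
            rw [Multiset.mem_map] at hmem
            obtain ⟨s, _, hs⟩ := hmem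
            omega
          · exact (Multiset.nodup_range d).map (fun a b h => by omega)
      have := Multiset.map_le_map (f := e) hidx
      rw [Multiset.map_cons] at this
      exact this
    · intro s hs
      by_cases hsd : s = d
      · subst hsd
        rw [if_pos rfl]
        constructor
        · rw [hdn]; exact hend
        · rw [Nat.mod_self]
          simpa using (hpair i (by omega)).2
      · rw [if_neg hsd]
        have hs' : s < d := by omega
        have hp := hpair (i + 1 + s) (by omega)
        constructor
        · exact hp.1
        · rw [Nat.mod_eq_of_lt (by omega)]
          have : i + 1 + (s + 1) = i + 1 + s + 1 := by omega
          rw [this]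
          exact hp.2
  exact hcon (d + 1) (by omega) this

lemma no_fresh {F : Multiset (Finset V)} {n : ℕ} {v : ℕ → V} {e : ℕ → Finset V}
    (hpath : IsBPath F (n + 1) v e)
    (hmax : ∀ (n' : ℕ) (v' : ℕ → V) (e' : ℕ → Finset V), IsBPath F n' v' e' → n' ≤ n + 1)
    {f : Finset V} {z : V}
    (hf : f ∈ F - Multiset.map e (Multiset.range n))
    (hend : v n ∈ f) (hz : z ∈ f) (hfr : ∀ j ≤ n, v j ≠ z) : False := by
  obtain ⟨hinj, hE, hpair⟩ := hpath
  rw [show n + 1 - 1 = n from rfl] at hE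
  have : IsBPath F (n + 2) (fun i => if i = n + 1 then z else v i)
      (fun i => if i = n then f else e i) := by
    refine ⟨?_, ?_, ?_⟩
    · intro a ha b hb hab
      dsimp only at hab
      by_cases h1 : a = n + 1 <;> by_cases h2 : b = n + 1
      · omega
      · rw [if_pos h1, if_neg h2] at hab
        exact absurd hab.symm (hfr b (by omega))
      · rw [if_neg h1, if_pos h2] at hab
        exact absurd hab (hfr a (by omega))
      · rw [if_neg h1, if_neg h2] at hab
        exact hinj a (by omega) b (by omega) hab
    · rw [show n + 2 - 1 = n + 1 from rfl, Multiset.range_succ, Multiset.map_cons, if_pos rfl]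
      have hcg : Multiset.map (fun i => if i = n then f else e i) (Multiset.range n)
          = Multiset.map e (Multiset.range n) := by
        apply Multiset.map_congr rfl
        intro x hx
        rw [Multiset.mem_range] at hx
        rw [if_neg (by omega)]
      rw [hcg]
      exact cons_le_of_mem_sub le_rfl hE hf
    · intro i hi
      dsimp only
      by_cases hin : i = n
      · subst hin
        rw [if_pos rfl, if_neg (by omega), if_pos rfl]
        exact ⟨hend, hz⟩
      · have hi' : i + 1 < n + 1 := by omega
        rw [if_neg hin, if_neg (by omega), if_neg (by omega)]
        exact hpair i hi'
  have := hmax (n + 2) _ _ this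
  omega

end Berge18

open Berge18 in
/-- Dirac-type condition for long Berge cycles in multihypergraphs: if `k ≥ 3`, every
hyperedge of the multihypergraph `F` has multiplicity at most `μ`, and every vertex lies
in at least `μ·2^(k-2) + 2` hyperedges (counted with multiplicity), then `F` contains a
Berge cycle of length at least `k`. -/
theorem stmt_18 {V : Type*} [DecidableEq V] [Nonempty V] (μ k : ℕ) (hμ : 1 ≤ μ)
    (hk : 3 ≤ k) (F : Multiset (Finset V))
    (hmult : ∀ A : Finset V, F.count A ≤ μ)
    (hδ : ∀ v : V, μ * 2 ^ (k - 2) + 2 ≤ Multiset.card (F.filter (fun e => v ∈ e))) :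
    ∃ ℓ : ℕ, k ≤ ℓ ∧ MHasBergeCycle F ℓ := by

  classical
  by_contra hcontra
  push_neg at hcontra
  obtain ⟨m, rfl⟩ : ∃ m, k = m + 3 := ⟨k - 3, by omega⟩
  have hdeg : ∀ x : V, μ * 2 ^ (m + 1) + 2 ≤ Multiset.card (F.filter (fun A => x ∈ A)) := by
    intro x
    have := hδ x
    rwa [show m + 3 - 2 = m + 1 by omega] at this
  have hm2 : m < 2 ^ m := Nat.lt_two_pow_self
  have hc2 : 2 ^ m ≤ μ * 2 ^ m := Nat.le_mul_of_pos_left _ hμ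
  -- there is a Berge path with 2 vertices
  have hx0 : ∃ f0 ∈ F, ∃ x0 y0, x0 ∈ f0 ∧ y0 ∈ f0 ∧ y0 ≠ x0 := by
    set x0 := Classical.arbitrary V with hx0def
    by_contra hno
    push_neg at hno
    have hall : ∀ f ∈ F, x0 ∈ f → f = {x0} := by
      intro f hf hx
      apply Finset.eq_singleton_iff_unique_mem.mpr
      exact ⟨hx, fun y hy => hno f hf x0 y hx hy⟩
    have heq : F.filter (fun A => x0 ∈ A) = F.filter (· = ({x0} : Finset V)) := by
      apply Multiset.filter_congr
      intro A hA
      constructor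
      · intro h; exact hall A hA h
      · intro h; rw [h]; exact Finset.mem_singleton_self x0
    have hcard : Multiset.card (F.filter (fun A => x0 ∈ A)) ≤ μ := by
      rw [heq, Multiset.filter_eq', Multiset.card_replicate]
      exact hmult _
    have := hdeg x0
    have hone : 1 ≤ 2 ^ (m + 1) := Nat.one_le_two_pow
    have : μ * 1 ≤ μ * 2 ^ (m + 1) := Nat.mul_le_mul_left μ hone
    omega
  obtain ⟨f0, hf0, x0, y0, hx0f, hy0f, hxyne⟩ := hx0
  have hpath2 : IsBPath F 2 (fun i => if i = 0 then x0 else y0) (fun _ => f0) := by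
    refine ⟨?_, ?_, ?_⟩
    · intro a ha b hb hab
      dsimp only at hab
      interval_cases a <;> interval_cases b <;> simp_all
    · rw [show (2:ℕ) - 1 = 1 from rfl, Multiset.range_succ, Multiset.range_zero,
        Multiset.map_cons, Multiset.map_zero]
      exact Multiset.singleton_le.mpr hf0
    · intro i hi
      have : i = 0 := by omega
      subst this
      simp only [if_pos rfl, if_neg (by omega : (1:ℕ) ≠ 0)]
      exact ⟨hx0f, hy0f⟩
  -- extract a longest Berge path
  set PathLen : ℕ → Prop := fun nn => ∃ v e, IsBPath F nn v e with hPL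
  have hbound : ∀ nn, PathLen nn → nn ≤ Multiset.card F + 1 := by
    rintro nn ⟨v, e, hinj, hE, hp⟩
    have := Multiset.card_le_card hE
    rw [Multiset.card_map, Multiset.card_range] at this
    omega
  have hFpos : 1 ≤ Multiset.card F := by
    have : f0 ∈ F := hf0
    exact Multiset.card_pos.mpr (by rintro rfl; simp at this)
  letI : DecidablePred PathLen := fun _ => Classical.dec _
  set P1 := Nat.findGreatest PathLen (Multiset.card F + 1) with hP1def
  have hP1path : PathLen P1 :=
    Nat.findGreatest_spec (m := 2) (by omega) ⟨_, _, hpath2⟩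
  have hP1ge2 : 2 ≤ P1 := Nat.le_findGreatest (by omega) ⟨_, _, hpath2⟩
  have hmax0 : ∀ (n' : ℕ) (v' : ℕ → V) (e' : ℕ → Finset V), IsBPath F n' v' e' → n' ≤ P1 := by
    intro n' v' e' h
    exact Nat.le_findGreatest (hbound n' ⟨v', e', h⟩) ⟨v', e', h⟩
  obtain ⟨v, e, hpath⟩ := hP1path
  set n := P1 - 1 with hndef
  have hn1 : 1 ≤ n := by omega
  have hP1n : P1 = n + 1 := by omega
  rw [hP1n] at hpath hmax0
  clear hP1def hP1ge2 hndef
  obtain ⟨hinj, hE0, hpair⟩ := hpath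
  have hpath : IsBPath F (n + 1) v e := ⟨hinj, hE0, hpair⟩
  rw [show n + 1 - 1 = n from rfl] at hE0
  set E := Multiset.map e (Multiset.range n) with hEdef
  set t := v n with htdef
  set lo := n + 1 - (m + 2) with hlodef
  set W := (Finset.Icc lo n).image v with hWdef
  have htW : t ∈ W :=
    Finset.mem_image.mpr ⟨n, Finset.mem_Icc.mpr ⟨by omega, le_rfl⟩, rfl⟩
  have hWcard : W.card ≤ m + 2 := by
    refine le_trans Finset.card_image_le ?_
    rw [Nat.card_Icc]
    omega
  -- every unused edge containing the endpoint lies inside the window W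
  have hUW : ∀ f ∈ F - E, t ∈ f → ∀ z ∈ f, z ∈ W := by
    intro f hf htf z hz
    by_cases hex : ∃ j, j ≤ n ∧ v j = z
    · obtain ⟨j, hj, rfl⟩ := hex
      by_cases hjlo : lo ≤ j
      · exact Finset.mem_image.mpr ⟨j, Finset.mem_Icc.mpr ⟨hjlo, hj⟩, rfl⟩
      · exact absurd (cycle_unused (k := m + 3) (by omega) hcontra hpath hf htf hz
          (by omega)) id
    · push_neg at hex
      exact absurd (no_fresh hpath hmax0 hf htf hz hex) id
  -- used edges containing the endpoint appear only near the end
  have hPos : ∀ i, i < n → t ∈ e i → n ≤ i + m + 2 := by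
    intro i hi hti
    by_contra hlt
    push_neg at hlt
    exact cycle_used (k := m + 3) (by omega) hcontra hpath hi hti (by omega)
  -- counting framework
  have hkey1 : ∀ (pr : Finset V → Prop) [DecidablePred pr],
      Multiset.card (F.filter pr)
        = Multiset.card ((F - E).filter pr) + Multiset.card (E.filter pr) := by
    intro pr _
    conv_lhs => rw [← tsub_add_cancel_of_le hE0]
    rw [Multiset.filter_add, Multiset.card_add]
  -- the generic powerset bound
  have hpowbd : ∀ (W' : Finset V), t ∈ W' →
      ((W'.powerset).filter (fun A => t ∈ A)).card ≤ 2 ^ (W'.card - 1) := by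
    intro W' htW'
    have hinj2 : Set.InjOn (fun A : Finset V => A.erase t)
        ↑((W'.powerset).filter (fun A => t ∈ A)) := by
      intro A hA B hB hAB
      simp only [Finset.coe_filter, Set.mem_setOf_eq, Finset.mem_powerset] at hA hB
      dsimp only at hAB
      rw [← Finset.insert_erase hA.2, ← Finset.insert_erase hB.2, hAB]
    have hmapsto : ∀ A ∈ (W'.powerset).filter (fun A => t ∈ A),
        A.erase t ∈ (W'.erase t).powerset := by
      intro A hA
      rw [Finset.mem_filter, Finset.mem_powerset] at hA
      rw [Finset.mem_powerset]
      exact Finset.erase_subset_erase t hA.1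
    calc ((W'.powerset).filter (fun A => t ∈ A)).card
        ≤ ((W'.erase t).powerset).card := Finset.card_le_card_of_injOn _ hmapsto hinj2
      _ = 2 ^ (W'.erase t).card := Finset.card_powerset _
      _ = 2 ^ (W'.card - 1) := by rw [Finset.card_erase_of_mem htW']
  -- relating multiset filters on E with index sets
  have hEfilt : ∀ (pr : Finset V → Prop) [DecidablePred pr],
      Multiset.card (E.filter pr) = ((Finset.range n).filter (fun i => pr (e i))).card := by
    intro pr _
    rw [hEdef, filter_map_eq, Multiset.card_map]
    rw [← Finset.range_val, ← Finset.filter_val]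
    rfl
  set sJunk := (Finset.range n).filter (fun i => t ∈ e i ∧ ¬ e i ⊆ W) with hsJunk
  -- main count : at least two junky used edges at the endpoint
  have hjunk2 : 2 ≤ sJunk.card := by
    set Spw := (W.powerset).filter (fun A => t ∈ A) with hSpw
    have hSpwcard : Spw.card ≤ 2 ^ (m + 1) := by
      refine le_trans (hpowbd W htW) ?_
      exact Nat.pow_le_pow_right (by norm_num) (by omega)
    have hUpart : (F - E).filter (fun A => t ∈ A) = (F - E).filter (· ∈ Spw) := by
      apply Multiset.filter_congr
      intro A hA
      constructor
      · intro h
        rw [hSpw, Finset.mem_filter, Finset.mem_powerset]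
        exact ⟨fun z hz => hUW A hA h z hz, h⟩
      · intro h
        rw [hSpw, Finset.mem_filter] at h
        exact h.2
    have hEsplit : Multiset.card (E.filter (fun A => t ∈ A))
        = Multiset.card (E.filter (· ∈ Spw)) + sJunk.card := by
      rw [hEfilt, hEfilt]
      have h1 : (Finset.range n).filter (fun i => e i ∈ Spw)
          = ((Finset.range n).filter (fun i => t ∈ e i)).filter (fun i => e i ⊆ W) := by
        rw [Finset.filter_filter]
        apply Finset.filter_congr
        intro i _
        rw [hSpw, Finset.mem_filter, Finset.mem_powerset]
        constructor
        · intro h; exact ⟨h.2, h.1⟩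
        · intro h; exact ⟨h.2, h.1⟩
      have h2 : sJunk
          = ((Finset.range n).filter (fun i => t ∈ e i)).filter (fun i => ¬ e i ⊆ W) := by
        rw [hsJunk, Finset.filter_filter]
      rw [h1, h2]
      exact (Finset.card_filter_add_card_filter_not (fun i => e i ⊆ W)).symm
    have hcomb : Multiset.card ((F - E).filter (· ∈ Spw))
          + Multiset.card (E.filter (· ∈ Spw))
        ≤ 2 ^ (m + 1) * μ := by
      rw [← hkey1]
      calc Multiset.card (F.filter (· ∈ Spw)) ≤ Spw.card * μ :=
            card_filter_mem_le F μ hmult Spw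
        _ ≤ 2 ^ (m + 1) * μ := Nat.mul_le_mul_right μ hSpwcard
    have hfin := hdeg t
    rw [hkey1 (fun A => t ∈ A)] at hfin
    rw [hUpart, hEsplit] at hfin
    have hmc : μ * 2 ^ (m + 1) = 2 ^ (m + 1) * μ := mul_comm _ _
    omega
  -- pick the junky index q with largest position
  have hget : ∃ q, q < n ∧ t ∈ e q ∧ ¬ e q ⊆ W ∧ lo ≤ q := by
    obtain ⟨a, ha, b, hb, hab⟩ := Finset.one_lt_card.mp (by omega : 1 < sJunk.card)
    rw [hsJunk, Finset.mem_filter, Finset.mem_range] at ha hb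
    rcases Nat.lt_or_ge a b with hlt | hge
    · refine ⟨b, hb.1, hb.2.1, hb.2.2, ?_⟩
      have := hPos a ha.1 ha.2.1
      omega
    · have hlt : b < a := by omega
      refine ⟨a, ha.1, ha.2.1, ha.2.2, ?_⟩
      have := hPos b hb.1 hb.2.1
      omega
  obtain ⟨q, hqn, hqt, hqW, hqlo⟩ := hget
  have hxW : v q ∈ W :=
    Finset.mem_image.mpr ⟨q, Finset.mem_Icc.mpr ⟨hqlo, by omega⟩, rfl⟩
  have hxt : v q ≠ t := by
    intro h
    have := hinj q (by omega) n (by omega) h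
    omega
  -- W1 : there is an unused edge containing both the endpoint and v q
  have hW1 : ∃ f, f ∈ F - E ∧ t ∈ f ∧ v q ∈ f := by
    by_contra hno
    push_neg at hno
    have hEb : Multiset.card (E.filter (fun A => t ∈ A)) ≤ m + 2 := by
      rw [hEfilt]
      have hsub : (Finset.range n).filter (fun i => t ∈ e i)
          ⊆ Finset.Icc (n - (m + 2)) (n - 1) := by
        intro i hi
        rw [Finset.mem_filter, Finset.mem_range] at hi
        have := hPos i hi.1 hi.2
        rw [Finset.mem_Icc]
        omega
      calc ((Finset.range n).filter (fun i => t ∈ e i)).card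
          ≤ (Finset.Icc (n - (m + 2)) (n - 1)).card := Finset.card_le_card hsub
        _ ≤ m + 2 := by rw [Nat.card_Icc]; omega
    have hUb : Multiset.card ((F - E).filter (fun A => t ∈ A)) ≤ 2 ^ m * μ := by
      set W2 := W.erase (v q) with hW2
      have htW2 : t ∈ W2 := Finset.mem_erase.mpr ⟨fun h => hxt h.symm, htW⟩
      set Spw' := (W2.powerset).filter (fun A => t ∈ A) with hSpw'
      have hScard : Spw'.card ≤ 2 ^ m := by
        refine le_trans (hpowbd W2 htW2) ?_
        apply Nat.pow_le_pow_right (by norm_num)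
        rw [hW2, Finset.card_erase_of_mem hxW]
        omega
      have hUeq : (F - E).filter (fun A => t ∈ A) = (F - E).filter (· ∈ Spw') := by
        apply Multiset.filter_congr
        intro A hA
        constructor
        · intro h
          rw [hSpw', Finset.mem_filter, Finset.mem_powerset]
          refine ⟨fun z hz => Finset.mem_erase.mpr ⟨?_, hUW A hA h z hz⟩, h⟩
          intro hzq
          subst hzq
          exact hno A hA h hz
        · intro h
          rw [hSpw', Finset.mem_filter] at h
          exact h.2
      rw [hUeq]
      calc Multiset.card ((F - E).filter (· ∈ Spw'))
          ≤ Multiset.card (F.filter (· ∈ Spw')) :=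
            Multiset.card_le_card (Multiset.filter_le_filter _ (tsub_le_self))
        _ ≤ Spw'.card * μ := card_filter_mem_le F μ hmult Spw'
        _ ≤ 2 ^ m * μ := Nat.mul_le_mul_right μ hScard
    have hfin := hdeg t
    rw [hkey1 (fun A => t ∈ A)] at hfin
    have hA : μ * 2 ^ (m + 1) = μ * 2 ^ m + μ * 2 ^ m := by rw [pow_succ]; ring
    have hcm : (2:ℕ) ^ m * μ = μ * 2 ^ m := mul_comm _ _
    omega
  obtain ⟨f, hfU, hft, hfq⟩ := hW1
  have hfW : ∀ z ∈ f, z ∈ W := hUW f hfU hft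
  have hfne : e q ≠ f := by
    intro h
    exact hqW (fun z hz => hfW z (h ▸ hz))
  -- the rerouted path Q'
  set v' : ℕ → V := fun i => if i ≤ q then v i else v (n + 1 + q - i) with hv'
  set e' : ℕ → Finset V := fun i => if i < q then e i else if i = q then f else e (n + q - i)
    with he'
  have hqmem : q ∈ Multiset.range n := Multiset.mem_range.mpr (by omega)
  set S := (Multiset.range n).erase q with hS
  have hcons : Multiset.range n = q ::ₘ S := (Multiset.cons_erase hqmem).symm
  have hSnodup : S.Nodup := (Multiset.nodup_range n).erase q
  have hSmem : ∀ i ∈ S, i < n ∧ i ≠ q := by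
    intro i hi
    constructor
    · exact Multiset.mem_range.mp (Multiset.mem_of_mem_erase hi)
    · intro h
      subst h
      exact (Multiset.nodup_range n).notMem_erase hi
  have hSmem' : ∀ i, i < n → i ≠ q → i ∈ S := by
    intro i h1 h2
    exact (Multiset.mem_erase_of_ne h2).mpr (Multiset.mem_range.mpr h1)
  have hmapS : Multiset.map e' S = Multiset.map e S := by
    have step1 : Multiset.map e' S
        = Multiset.map (fun i => e (if i < q then i else n + q - i)) S := by
      apply Multiset.map_congr rfl
      intro i hi
      obtain ⟨hin, hiq⟩ := hSmem i hi
      by_cases h : i < q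
      · simp only [he', if_pos h]
      · simp only [he', if_neg h, if_neg hiq]
    have step3 : Multiset.map (fun i => if i < q then i else n + q - i) S = S := by
      apply Multiset.eq_of_le_of_card_le
      · rw [Multiset.le_iff_subset]
        · intro x hx
          rw [Multiset.mem_map] at hx
          obtain ⟨i, hi, rfl⟩ := hx
          obtain ⟨hin, hiq⟩ := hSmem i hi
          by_cases h : i < q
          · rw [if_pos h]; exact hi
          · rw [if_neg h]
            exact hSmem' _ (by omega) (by omega)
        · apply Multiset.Nodup.map_on _ hSnodup
          intro a haS b hbS hab2
          obtain ⟨han, haq⟩ := hSmem a haS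
          obtain ⟨hbn, hbq⟩ := hSmem b hbS
          split_ifs at hab2 <;> omega
      · rw [Multiset.card_map]
    calc Multiset.map e' S
        = Multiset.map (fun i => e (if i < q then i else n + q - i)) S := step1
      _ = Multiset.map e (Multiset.map (fun i => if i < q then i else n + q - i) S) := by
          rw [Multiset.map_map]; rfl
      _ = Multiset.map e S := by rw [step3]
  have hEQ : Multiset.map e' (Multiset.range n) = f ::ₘ Multiset.map e S := by
    rw [hcons, Multiset.map_cons, hmapS]
    congr 1
    simp [he']
  have hMle : Multiset.map e S ≤ E := by
    rw [hEdef, hcons, Multiset.map_cons]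
    exact Multiset.le_cons_self _ _
  have hpathQ : IsBPath F (n + 1) v' e' := by
    refine ⟨?_, ?_, ?_⟩
    · intro a ha b hb hab
      simp only [hv'] at hab
      by_cases h1 : a ≤ q <;> by_cases h2 : b ≤ q
      · rw [if_pos h1, if_pos h2] at hab
        exact hinj a (by omega) b (by omega) hab
      · rw [if_pos h1, if_neg h2] at hab
        have := hinj a (by omega) (n + 1 + q - b) (by omega) hab
        omega
      · rw [if_neg h1, if_pos h2] at hab
        have := hinj (n + 1 + q - a) (by omega) b (by omega) hab
        omega
      · rw [if_neg h1, if_neg h2] at hab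
        have := hinj (n + 1 + q - a) (by omega) (n + 1 + q - b) (by omega) hab
        omega
    · rw [show n + 1 - 1 = n from rfl, hEQ]
      exact cons_le_of_mem_sub hMle hE0 hfU
    · intro i hi
      simp only [hv', he']
      by_cases h1 : i < q
      · rw [if_pos (by omega : i ≤ q), if_pos (by omega : i + 1 ≤ q), if_pos h1]
        exact hpair i (by omega)
      · by_cases h2 : i = q
        · subst h2
          rw [if_pos (le_refl i), if_neg (by omega : ¬ i + 1 ≤ i), if_neg (lt_irrefl i),
            if_pos rfl]
          have hidx : n + 1 + i - (i + 1) = n := by omega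
          rw [hidx]
          exact ⟨hfq, hft⟩
        · have h3 : q < i := by omega
          rw [if_neg (by omega : ¬ i ≤ q), if_neg (by omega : ¬ i + 1 ≤ q),
            if_neg (by omega : ¬ i < q), if_neg h2]
          have hv1 : n + 1 + q - i = (n + q - i) + 1 := by omega
          have hv2 : n + 1 + q - (i + 1) = n + q - i := by omega
          rw [hv1, hv2]
          have hp := hpair (n + q - i) (by omega)
          exact ⟨hp.2, hp.1⟩
  -- the edge e q is now unused
  have hfreed : e q ∈ F - Multiset.map e' (Multiset.range n) := by
    rw [← Multiset.count_pos, Multiset.count_sub, hEQ]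
    have h1 : (f ::ₘ Multiset.map e S).count (e q) = (Multiset.map e S).count (e q) := by
      rw [Multiset.count_cons, if_neg hfne, add_zero]
    have h2 : E.count (e q) = (Multiset.map e S).count (e q) + 1 := by
      rw [hEdef, hcons, Multiset.map_cons, Multiset.count_cons, if_pos rfl]
    have h3 : E.count (e q) ≤ F.count (e q) := Multiset.count_le_of_le _ hE0
    omega
  have hendQ : v' n ∈ e q := by
    have hvn : v' n = v (q + 1) := by
      simp only [hv']
      rw [if_neg (by omega : ¬ n ≤ q)]
      congr 1
      omega
    rw [hvn]
    exact (hpair q (by omega)).2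
  -- final dichotomy on a junk vertex of e q
  obtain ⟨x2, hx2e, hx2W⟩ := Finset.not_subset.mp hqW
  by_cases hex2 : ∃ j, j ≤ n ∧ v j = x2
  · obtain ⟨j, hj, rfl⟩ := hex2
    have hjlo : j < lo := by
      by_contra hge
      push_neg at hge
      exact hx2W (Finset.mem_image.mpr ⟨j, Finset.mem_Icc.mpr ⟨hge, hj⟩, rfl⟩)
    have hvj' : v' j ∈ e q := by
      simp only [hv']
      rw [if_pos (by omega : j ≤ q)]
      exact hx2e
    exact cycle_unused (k := m + 3) (by omega) hcontra hpathQ hfreed hendQ hvj' (by omega)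
  · push_neg at hex2
    apply no_fresh hpathQ hmax0 hfreed hendQ hx2e
    intro j hj
    simp only [hv']
    by_cases h : j ≤ q
    · rw [if_pos h]
      exact hex2 j (by omega)
    · rw [if_neg h]
      exact hex2 (n + 1 + q - j) (by omega)
end

section
/- Let k ≥ 6 and let G be the union of two vertex-disjoint complete graphs K_{k+1} on vertex sets V₁ and V₂ with at most one additional edge between them (so G ∈ G₁ on n = 2k+2 vertices). If A is any set of at most 2 edges of G and B consists of two vertex-disjoint pairs x₁x₂ and y₁y₂ joining V₁ and V₂, then the graph (E(G) \ A) ∪ B is Hamiltonian. -/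
open Finset SimpleGraph

lemma complete_path {V : Type*} [DecidableEq V] (H : SimpleGraph V) :
    ∀ (n : ℕ) (S : Finset V) (a b : V), S.card = n → a ∈ S → b ∈ S → a ≠ b →
    (∀ u v : V, u ≠ v → u ∈ S → v ∈ S → H.Adj u v) →
    ∃ p : H.Walk a b, p.IsPath ∧ p.support.toFinset = S := by
  intro n
  induction n with
  | zero => intro S a b hc ha _ _ _; simp [Finset.card_eq_zero.mp hc] at ha
  | succ n ih =>
    intro S a b hc ha hb hab hadj
    by_cases hS : S ⊆ {a, b}
    · have hSeq : S = {a, b} := Finset.Subset.antisymm hS (by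
        intro x hx; simp at hx; rcases hx with rfl | rfl <;> assumption)
      refine ⟨Walk.cons (hadj a b hab ha hb) Walk.nil, ?_, ?_⟩
      · simp [Walk.cons_isPath_iff, hab]
      · rw [hSeq]; simp [Walk.support_cons]
    · obtain ⟨c, hcS, hcab⟩ := Finset.not_subset.mp hS
      simp only [Finset.mem_insert, Finset.mem_singleton, not_or] at hcab
      obtain ⟨hca, hcb⟩ := hcab
      have hcard' : (S.erase a).card = n := by
        rw [Finset.card_erase_of_mem ha, hc]; rfl
      obtain ⟨p, hp, hps⟩ := ih (S.erase a) c b hcard'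
        (Finset.mem_erase.mpr ⟨hca, hcS⟩)
        (Finset.mem_erase.mpr ⟨hab.symm, hb⟩) hcb
        (fun u v huv hu hv => hadj u v huv (Finset.mem_of_mem_erase hu)
          (Finset.mem_of_mem_erase hv))
      have hans : a ∉ p.support := by
        intro h
        have : a ∈ p.support.toFinset := List.mem_toFinset.mpr h
        rw [hps] at this
        exact (Finset.mem_erase.mp this).1 rfl
      refine ⟨Walk.cons (hadj a c (Ne.symm hca) ha hcS) p, ?_, ?_⟩
      · exact (Walk.cons_isPath_iff _ _).mpr ⟨hp, hans⟩
      · rw [Walk.support_cons]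
        simp only [List.toFinset_cons, hps]
        exact Finset.insert_erase ha

lemma avoiding_path {V : Type*} [DecidableEq V] (H : SimpleGraph V) :
    ∀ (n : ℕ) (S : Finset V) (F : Finset (Sym2 V)) (a b : V), S.card = n →
    a ∈ S → b ∈ S → a ≠ b →
    (∀ e ∈ F, ¬ e.IsDiag) → (∀ e ∈ F, ∀ x ∈ e, x ∈ S) →
    (∀ u v : V, u ≠ v → u ∈ S → v ∈ S → s(u,v) ∉ F → H.Adj u v) →
    (2 * F.card + 3 ≤ S.card ∨ (2 * F.card + 2 ≤ S.card ∧ ∃ e ∈ F, a ∈ e)) →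
    ∃ p : H.Walk a b, p.IsPath ∧ p.support.toFinset = S := by
  intro n
  induction n with
  | zero => intro S F a b hc ha _ _ _ _ _ _; simp [Finset.card_eq_zero.mp hc] at ha
  | succ n ih =>
    intro S F a b hc ha hb hab hFdiag hFin hadj hinv
    rcases Finset.eq_empty_or_nonempty F with rfl | hFne
    · exact complete_path H (n+1) S a b hc ha hb hab
        (fun u v huv hu hv => hadj u v huv hu hv (by simp))
    have hF1 : 1 ≤ F.card := Finset.card_pos.mpr hFne
    have hS4 : 2 * F.card + 2 ≤ S.card := by
      rcases hinv with h | ⟨h, _⟩ <;> omega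
    have hcard' : (S.erase a).card = n := by rw [Finset.card_erase_of_mem ha, hc]; rfl
    by_cases hcase : ∃ e ∈ F, a ∈ e
    · -- Case A: some F-edge touches a; remove a and recurse with smaller F
      obtain ⟨e₀, he₀F, he₀a⟩ := hcase
      have hex : ∃ c ∈ S \ {a, b}, s(a, c) ∉ F := by
        by_contra hno
        push_neg at hno
        have hinj : Set.InjOn (fun c => s(a, c)) (S \ {a, b} : Finset V) := by
          intro u _ v _ huv
          exact Sym2.congr_right.mp huv
        have hle : (S \ {a, b}).card ≤ F.card :=
          Finset.card_le_card_of_injOn (fun c => s(a, c)) (fun c hc => hno c hc) hinj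
        have hge : S.card - 2 ≤ (S \ {a, b}).card := by
          have h1 := Finset.le_card_sdiff ({a, b} : Finset V) S
          have h2 : ({a, b} : Finset V).card ≤ 2 :=
            (Finset.card_insert_le _ _).trans (by simp)
          omega
        omega
      obtain ⟨c, hcS, hacF⟩ := hex
      rw [Finset.mem_sdiff] at hcS
      obtain ⟨hcS, hcab⟩ := hcS
      simp only [Finset.mem_insert, Finset.mem_singleton, not_or] at hcab
      obtain ⟨hca, hcb⟩ := hcab
      set F' := F.filter (fun e => a ∉ e) with hF'
      have hF'sub : F' ⊆ F.erase e₀ := by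
        intro e he
        rw [hF', Finset.mem_filter] at he
        refine Finset.mem_erase.mpr ⟨?_, he.1⟩
        rintro rfl; exact he.2 he₀a
      have hF'card : F'.card + 1 ≤ F.card := by
        have h1 := Finset.card_le_card hF'sub
        rw [Finset.card_erase_of_mem he₀F] at h1
        omega
      obtain ⟨p, hp, hps⟩ := ih (S.erase a) F' c b hcard'
        (Finset.mem_erase.mpr ⟨hca, hcS⟩)
        (Finset.mem_erase.mpr ⟨hab.symm, hb⟩) hcb
        (fun e he => hFdiag e (Finset.mem_filter.mp he).1)
        (by
          intro e he x hx
          rw [hF', Finset.mem_filter] at he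
          refine Finset.mem_erase.mpr ⟨?_, hFin e he.1 x hx⟩
          rintro rfl; exact he.2 hx)
        (by
          intro u v huv hu hv hne
          refine hadj u v huv (Finset.mem_of_mem_erase hu) (Finset.mem_of_mem_erase hv) ?_
          intro hmem
          refine hne (Finset.mem_filter.mpr ⟨hmem, ?_⟩)
          intro hax
          rw [Sym2.mem_iff] at hax
          rcases hax with rfl | rfl
          · exact (Finset.mem_erase.mp hu).1 rfl
          · exact (Finset.mem_erase.mp hv).1 rfl)
        (Or.inl (by rw [hcard']; omega))
      have hans : a ∉ p.support := by
        intro h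
        have : a ∈ p.support.toFinset := List.mem_toFinset.mpr h
        rw [hps] at this
        exact (Finset.mem_erase.mp this).1 rfl
      refine ⟨Walk.cons (hadj a c (Ne.symm hca) ha hcS hacF) p, ?_, ?_⟩
      · exact (Walk.cons_isPath_iff _ _).mpr ⟨hp, hans⟩
      · rw [Walk.support_cons]
        simp only [List.toFinset_cons, hps]
        exact Finset.insert_erase ha
    · -- Case B: no F-edge touches a
      push_neg at hcase
      have hinv3 : 2 * F.card + 3 ≤ S.card := by
        rcases hinv with h | ⟨_, e, heF, hea⟩
        · exact h
        · exact absurd hea (hcase e heF)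
      obtain ⟨e₀, he₀F⟩ := hFne
      -- pick endpoint c of e₀ with c ≠ b
      obtain ⟨u, v⟩ := e₀
      have huv : u ≠ v := by
        have := hFdiag _ he₀F
        simpa [Sym2.isDiag_iff_proj_eq] using this
      have hua : u ≠ a := by
        intro h; exact hcase _ he₀F (by rw [h]; exact Sym2.mem_mk_left a v)
      have hva : v ≠ a := by
        intro h; exact hcase _ he₀F (by rw [h]; exact Sym2.mem_mk_right u a)
      have huS : u ∈ S := hFin _ he₀F u (Sym2.mem_mk_left u v)
      have hvS : v ∈ S := hFin _ he₀F v (Sym2.mem_mk_right u v)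
      obtain ⟨c, hcS, hca, hcb, hce⟩ :
          ∃ c, c ∈ S ∧ c ≠ a ∧ c ≠ b ∧ c ∈ (s(u,v) : Sym2 V) := by
        by_cases hub : u = b
        · exact ⟨v, hvS, hva, fun h => huv (hub ▸ h ▸ rfl), Sym2.mem_mk_right u v⟩
        · exact ⟨u, huS, hua, hub, Sym2.mem_mk_left u v⟩
      have hFin' : ∀ e ∈ F, ∀ x ∈ e, x ∈ S.erase a := by
        intro e he x hx
        refine Finset.mem_erase.mpr ⟨?_, hFin e he x hx⟩
        intro hxa
        exact hcase e he (hxa ▸ hx)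
      obtain ⟨p, hp, hps⟩ := ih (S.erase a) F c b hcard'
        (Finset.mem_erase.mpr ⟨hca, hcS⟩)
        (Finset.mem_erase.mpr ⟨hab.symm, hb⟩) hcb hFdiag hFin'
        (fun u' v' huv' hu hv => hadj u' v' huv' (Finset.mem_of_mem_erase hu)
          (Finset.mem_of_mem_erase hv))
        (Or.inr ⟨by rw [hcard']; omega, s(u,v), he₀F, hce⟩)
      have hans : a ∉ p.support := by
        intro h
        have : a ∈ p.support.toFinset := List.mem_toFinset.mpr h
        rw [hps] at this
        exact (Finset.mem_erase.mp this).1 rfl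
      have hacF : s(a, c) ∉ F := fun h => hcase _ h (Sym2.mem_mk_left a c)
      refine ⟨Walk.cons (hadj a c (Ne.symm hca) ha hcS hacF) p, ?_, ?_⟩
      · exact (Walk.cons_isPath_iff _ _).mpr ⟨hp, hans⟩
      · rw [Walk.support_cons]
        simp only [List.toFinset_cons, hps]
        exact Finset.insert_erase ha


/-- Lemma on modified graphs in class `𝒢₁`: let `k ≥ 6` and let `G` consist of two
disjoint `(k+1)`-cliques on `V₁` and `V₂` covering all `n = 2k+2` vertices, plus at most
one crossing edge. If `A` is any set of at most two edges of `G`, and `B` consists of two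
vertex-disjoint crossing pairs `x₁x₂` and `y₁y₂` (`x₁, y₁ ∈ V₁`, `x₂, y₂ ∈ V₂`), then
the graph with edge set `(E(G) \ A) ∪ B` is Hamiltonian. -/
theorem stmt_19 {V : Type*} [Fintype V] [DecidableEq V] (G : SimpleGraph V)
    (k : ℕ) (hk : 6 ≤ k) (V₁ V₂ : Finset V)
    (hunion : V₁ ∪ V₂ = Finset.univ) (hdisj : Disjoint V₁ V₂)
    (hcard₁ : V₁.card = k + 1) (hcard₂ : V₂.card = k + 1)
    (hclique₁ : ∀ a b : V, a ≠ b → a ∈ V₁ → b ∈ V₁ → G.Adj a b)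
    (hclique₂ : ∀ a b : V, a ≠ b → a ∈ V₂ → b ∈ V₂ → G.Adj a b)
    (hcross : {e : Sym2 V | e ∈ G.edgeSet ∧ ¬ (∀ x ∈ e, x ∈ V₁) ∧
      ¬ (∀ x ∈ e, x ∈ V₂)}.Subsingleton)
    (A : Finset (Sym2 V)) (hA : ↑A ⊆ G.edgeSet) (hAcard : A.card ≤ 2)
    (x₁ y₁ x₂ y₂ : V) (hx₁ : x₁ ∈ V₁) (hy₁ : y₁ ∈ V₁) (hx₂ : x₂ ∈ V₂) (hy₂ : y₂ ∈ V₂)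
    (hxy₁ : x₁ ≠ y₁) (hxy₂ : x₂ ≠ y₂) :
    (SimpleGraph.fromEdgeSet ((G.edgeSet \ ↑A) ∪ {s(x₁, x₂), s(y₁, y₂)})).IsHamiltonian := by
  set H := SimpleGraph.fromEdgeSet ((G.edgeSet \ ↑A) ∪ {s(x₁, x₂), s(y₁, y₂)}) with hH
  have hd12 : ∀ x, x ∈ V₁ → x ∉ V₂ := fun x hx => Finset.disjoint_left.mp hdisj hx
  -- path in V₁ from x₁ to y₁
  set F₁ := A.filter (fun e => ∀ x ∈ e, x ∈ V₁) with hF₁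
  set F₂ := A.filter (fun e => ∀ x ∈ e, x ∈ V₂) with hF₂
  have hadj₁ : ∀ u v : V, u ≠ v → u ∈ V₁ → v ∈ V₁ → s(u,v) ∉ F₁ → H.Adj u v := by
    intro u v huv hu hv hne
    rw [hH, SimpleGraph.fromEdgeSet_adj]
    refine ⟨Set.mem_union_left _ ⟨(G.mem_edgeSet).mpr (hclique₁ u v huv hu hv), ?_⟩, huv⟩
    intro hmem
    refine hne (Finset.mem_filter.mpr ⟨hmem, ?_⟩)
    intro x hx
    rw [Sym2.mem_iff] at hx
    rcases hx with rfl | rfl <;> assumption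
  have hadj₂ : ∀ u v : V, u ≠ v → u ∈ V₂ → v ∈ V₂ → s(u,v) ∉ F₂ → H.Adj u v := by
    intro u v huv hu hv hne
    rw [hH, SimpleGraph.fromEdgeSet_adj]
    refine ⟨Set.mem_union_left _ ⟨(G.mem_edgeSet).mpr (hclique₂ u v huv hu hv), ?_⟩, huv⟩
    intro hmem
    refine hne (Finset.mem_filter.mpr ⟨hmem, ?_⟩)
    intro x hx
    rw [Sym2.mem_iff] at hx
    rcases hx with rfl | rfl <;> assumption
  have hdiag : ∀ e ∈ A, ¬ e.IsDiag := fun e he => G.not_isDiag_of_mem_edgeSet (hA he)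
  have hc₁ : 2 * F₁.card + 3 ≤ V₁.card := by
    have h1 : F₁.card ≤ 2 := le_trans (Finset.card_filter_le _ _) hAcard
    rw [hcard₁]; omega
  have hc₂ : 2 * F₂.card + 3 ≤ V₂.card := by
    have h1 : F₂.card ≤ 2 := le_trans (Finset.card_filter_le _ _) hAcard
    rw [hcard₂]; omega
  obtain ⟨p₁, hp₁, hps₁⟩ := avoiding_path H V₁.card V₁ F₁ x₁ y₁ rfl hx₁ hy₁ hxy₁
    (fun e he => hdiag e (Finset.mem_filter.mp he).1)
    (fun e he => (Finset.mem_filter.mp he).2) hadj₁ (Or.inl hc₁)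
  obtain ⟨p₂, hp₂, hps₂⟩ := avoiding_path H V₂.card V₂ F₂ y₂ x₂ rfl hy₂ hx₂
    (Ne.symm hxy₂) (fun e he => hdiag e (Finset.mem_filter.mp he).1)
    (fun e he => (Finset.mem_filter.mp he).2) hadj₂ (Or.inl hc₂)
  have hy12 : y₁ ≠ y₂ := fun h => hd12 y₁ hy₁ (h ▸ hy₂)
  have hx12 : x₁ ≠ x₂ := fun h => hd12 x₁ hx₁ (h ▸ hx₂)
  have hadjB : H.Adj y₁ y₂ := by
    rw [hH, SimpleGraph.fromEdgeSet_adj]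
    exact ⟨Set.mem_union_right _ (by right; rfl), hy12⟩
  have hadjX : H.Adj x₂ x₁ := by
    rw [hH, SimpleGraph.fromEdgeSet_adj]
    refine ⟨Set.mem_union_right _ (by left; rw [Sym2.eq_swap]), Ne.symm hx12⟩
  set P := p₁.append (SimpleGraph.Walk.cons hadjB p₂) with hP
  have hPsupp : P.support = p₁.support ++ p₂.support := by
    rw [hP, SimpleGraph.Walk.support_append, SimpleGraph.Walk.support_cons, List.tail_cons]
  have hmem₁ : ∀ x ∈ p₁.support, x ∈ V₁ := by
    intro x hx; rw [← hps₁]; exact List.mem_toFinset.mpr hx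
  have hmem₂ : ∀ x ∈ p₂.support, x ∈ V₂ := by
    intro x hx; rw [← hps₂]; exact List.mem_toFinset.mpr hx
  have hPpath : P.IsPath := by
    rw [SimpleGraph.Walk.isPath_def, hPsupp, List.nodup_append]
    refine ⟨hp₁.support_nodup, hp₂.support_nodup, ?_⟩
    intro x hx1 y hx2 hxy
    subst hxy
    exact hd12 x (hmem₁ x hx1) (hmem₂ x hx2)
  have hedge : s(x₂, x₁) ∉ P.edges := by
    rw [hP, SimpleGraph.Walk.edges_append, SimpleGraph.Walk.edges_cons]
    intro h
    rcases List.mem_append.mp h with h1 | h2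
    · exact hd12 x₂ (hmem₁ x₂ (p₁.fst_mem_support_of_mem_edges h1)) hx₂
    · rcases List.mem_cons.mp h2 with h3 | h4
      · have h5 : x₂ = y₁ ∨ x₂ = y₂ := by
          have hm := Sym2.mem_mk_left x₂ x₁
          rw [h3] at hm
          simpa using hm
        rcases h5 with h5 | h5
        · exact hd12 y₁ hy₁ (h5 ▸ hx₂)
        · exact hxy₂ h5
      · exact hd12 x₁ hx₁ (hmem₂ x₁ (p₂.snd_mem_support_of_mem_edges h4))
  have hcyc : (SimpleGraph.Walk.cons hadjX P).IsCycle :=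
    (SimpleGraph.Walk.cons_isCycle_iff P hadjX).mpr ⟨hPpath, hedge⟩
  intro _
  refine ⟨x₂, SimpleGraph.Walk.cons hadjX P, ?_⟩
  rw [SimpleGraph.Walk.isHamiltonianCycle_iff_isCycle_and_support_count_tail_eq_one]
  refine ⟨hcyc, ?_⟩
  intro a
  rw [SimpleGraph.Walk.support_cons, List.tail_cons]
  have hmem : a ∈ P.support := by
    rw [hPsupp, List.mem_append]
    have : a ∈ V₁ ∪ V₂ := hunion ▸ Finset.mem_univ a
    rcases Finset.mem_union.mp this with h | h
    · left; rw [← List.mem_toFinset, hps₁]; exact h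
    · right; rw [← List.mem_toFinset, hps₂]; exact h
  exact List.count_eq_one_of_mem hPpath.support_nodup hmem
end
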